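/- arXiv:2512.10188 — 2 statements merged into one kernel-verified Lean document; each statement's English description precedes it below -/
import Mathlib

section
/- Fix an n×d real matrix A with ‖AᵀA‖ < 1 (spectral norm). If a vector w ∈ ℝᵈ is orthogonal to ker(A), then (I − AᵀA)w is also orthogonal to ker(A), and ‖(I − AᵀA)w‖₂ ≤ (1 − σ⁺min(AᵀA)) · ‖w‖₂, where σ⁺min(AᵀA) denotes the smallest non-zero singular value of AᵀA. -/
open Matrix MeasureTheory ProbabilityTheory Filter
open scoped BigOperators

noncomputable section

/-- Euclidean norm of a vector in `Fin n → ℝ`. -/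
def l2norm {n : ℕ} (v : Fin n → ℝ) : ℝ := Real.sqrt (∑ i, (v i) ^ 2)

/-- Spectral norm (ℓ²-operator norm) of a real matrix. -/
def specNorm {m n : ℕ} (A : Matrix (Fin m) (Fin n) ℝ) : ℝ :=
  sSup {c : ℝ | ∃ v : Fin n → ℝ, l2norm v = 1 ∧ c = l2norm (A *ᵥ v)}

/-- The smallest non-zero singular value of a real matrix:
the infimum of all positive `s` such that `s ^ 2` is an eigenvalue of `AᵀA`. -/
def sigmaMinPos {m n : ℕ} (A : Matrix (Fin m) (Fin n) ℝ) : ℝ :=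
  sInf {s : ℝ | 0 < s ∧ ∃ v : Fin n → ℝ, v ≠ 0 ∧ (Aᵀ * A) *ᵥ v = (s ^ 2) • v}

/-- `B` is the Moore–Penrose pseudo-inverse of `A` (the four Penrose conditions). -/
def IsMoorePenrose {m n : ℕ} (A : Matrix (Fin m) (Fin n) ℝ)
    (B : Matrix (Fin n) (Fin m) ℝ) : Prop :=
  A * B * A = A ∧ B * A * B = B ∧ (A * B)ᵀ = A * B ∧ (B * A)ᵀ = B * A

/-- `w` lies in the orthogonal complement of `ker A`. -/
def perpKer {m n : ℕ} (A : Matrix (Fin m) (Fin n) ℝ) (w : Fin n → ℝ) : Prop :=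
  ∀ v : Fin n → ℝ, A *ᵥ v = 0 → w ⬝ᵥ v = 0

/-- Entrywise expectation of a random matrix. -/
def matExp {Ω : Type*} [MeasurableSpace Ω] (μ : Measure Ω) {m n : ℕ}
    (M : Ω → Matrix (Fin m) (Fin n) ℝ) : Matrix (Fin m) (Fin n) ℝ :=
  Matrix.of fun i j => ∫ ω, M ω i j ∂μ

/-- Entrywise expectation of a random vector. -/
def vecExp {Ω : Type*} [MeasurableSpace Ω] (μ : Measure Ω) {n : ℕ}
    (v : Ω → Fin n → ℝ) : Fin n → ℝ :=
  fun i => ∫ ω, v ω i ∂μ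

lemma l2norm_eq_norm {d : ℕ} (v : Fin d → ℝ) :
    l2norm v = ‖(WithLp.equiv 2 (Fin d → ℝ)).symm v‖ := by
  rw [EuclideanSpace.norm_eq]
  simp [l2norm, Real.norm_eq_abs, sq_abs]

lemma rwgd_inner_eq_dot {d : ℕ} (x : EuclideanSpace ℝ (Fin d)) (y : Fin d → ℝ) :
    (inner ℝ x ((WithLp.equiv 2 (Fin d → ℝ)).symm y) : ℝ) = (⇑x) ⬝ᵥ y := by
  simp [PiLp.inner_apply, dotProduct, mul_comm]

/-- fixed-point contraction lemma.
If `‖AᵀA‖ < 1` and `w ⊥ ker A`, then `(I - AᵀA) w ⊥ ker A` and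
`‖(I - AᵀA) w‖₂ ≤ (1 - σ⁺min(AᵀA)) ‖w‖₂`. -/
theorem randomly_weighted_gd_stmt1 {n d : ℕ}
    (A : Matrix (Fin n) (Fin d) ℝ)
    (hA : specNorm (Aᵀ * A) < 1)
    (w : Fin d → ℝ) (hw : perpKer A w) :
    perpKer A (((1 : Matrix (Fin d) (Fin d) ℝ) - Aᵀ * A) *ᵥ w) ∧
      l2norm (((1 : Matrix (Fin d) (Fin d) ℝ) - Aᵀ * A) *ᵥ w)
        ≤ (1 - sigmaMinPos (Aᵀ * A)) * l2norm w := by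
  classical
  set M : Matrix (Fin d) (Fin d) ℝ := Aᵀ * A with hMdef
  have hMsymm : Mᵀ = M := by
    rw [hMdef, transpose_mul, transpose_transpose]
  -- Part 1
  have part1 : perpKer A (((1 : Matrix (Fin d) (Fin d) ℝ) - M) *ᵥ w) := by
    intro v hv
    have hMv : M *ᵥ v = 0 := by
      rw [hMdef, ← mulVec_mulVec, hv, mulVec_zero]
    have h1 : (M *ᵥ w) ⬝ᵥ v = w ⬝ᵥ (M *ᵥ v) := by
      rw [dotProduct_mulVec, ← mulVec_transpose, hMsymm, dotProduct_comm]
    rw [sub_mulVec, one_mulVec, sub_dotProduct, hw v hv, h1, hMv, dotProduct_zero, sub_zero]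
  refine ⟨part1, ?_⟩
  -- Hermitian structure
  have hM : M.IsHermitian := by
    have := isHermitian_conjTranspose_mul_self A
    simpa [Matrix.conjTranspose_eq_transpose_of_trivial] using this
  set B := hM.eigenvectorBasis with hBdef
  set μ := hM.eigenvalues with hμdef
  have hdotM : ∀ (j : Fin d) (x : Fin d → ℝ),
      (⇑(B j)) ⬝ᵥ (M *ᵥ x) = μ j * ((⇑(B j)) ⬝ᵥ x) := by
    intro j x
    rw [dotProduct_mulVec, ← mulVec_transpose, hMsymm, hM.mulVec_eigenvectorBasis,
      smul_dotProduct]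
    rfl
  have hμ0 : ∀ j, 0 ≤ μ j := by
    intro j
    exact (Matrix.PosSemidef.eigenvalues_nonneg (by
      have := Matrix.posSemidef_conjTranspose_mul_self A
      simpa [Matrix.conjTranspose_eq_transpose_of_trivial] using this) j)
  have hBnorm : ∀ j, l2norm (⇑(B j)) = 1 := by
    intro j
    rw [l2norm_eq_norm]
    exact B.orthonormal.1 j
  have hBne : ∀ j, (⇑(B j) : Fin d → ℝ) ≠ 0 := by
    intro j h
    have := hBnorm j
    rw [h] at this
    simp [l2norm] at this
  have hsmul : ∀ (c : ℝ) (v : Fin d → ℝ), l2norm (c • v) = |c| * l2norm v := by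
    intro c v
    rw [l2norm_eq_norm, l2norm_eq_norm]
    have : (WithLp.equiv 2 (Fin d → ℝ)).symm (c • v)
        = c • (WithLp.equiv 2 (Fin d → ℝ)).symm v := rfl
    rw [this, norm_smul, Real.norm_eq_abs]
  -- eigenvalues < 1
  have hμ1 : ∀ j, μ j < 1 := by
    intro j
    have hmem : μ j ∈ {c : ℝ | ∃ v : Fin d → ℝ, l2norm v = 1 ∧ c = l2norm (M *ᵥ v)} := by
      refine ⟨⇑(B j), hBnorm j, ?_⟩
      rw [hM.mulVec_eigenvectorBasis]
      rw [hsmul, hBnorm j, abs_of_nonneg (hμ0 j), mul_one]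
    have hbdd : BddAbove {c : ℝ | ∃ v : Fin d → ℝ, l2norm v = 1 ∧ c = l2norm (M *ᵥ v)} := by
      refine ⟨‖(LinearMap.toContinuousLinearMap (Matrix.toEuclideanLin M))‖, ?_⟩
      rintro c ⟨v, hv1, rfl⟩
      have h1 : l2norm (M *ᵥ v)
          = ‖(LinearMap.toContinuousLinearMap (Matrix.toEuclideanLin M))
              ((WithLp.equiv 2 (Fin d → ℝ)).symm v)‖ := by
        rw [l2norm_eq_norm]; rfl
      rw [h1]
      calc ‖(LinearMap.toContinuousLinearMap (Matrix.toEuclideanLin M))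
              ((WithLp.equiv 2 (Fin d → ℝ)).symm v)‖
          ≤ ‖(LinearMap.toContinuousLinearMap (Matrix.toEuclideanLin M))‖
            * ‖(WithLp.equiv 2 (Fin d → ℝ)).symm v‖ :=
            ContinuousLinearMap.le_opNorm _ _
        _ = ‖(LinearMap.toContinuousLinearMap (Matrix.toEuclideanLin M))‖ := by
            rw [← l2norm_eq_norm, hv1, mul_one]
    exact lt_of_le_of_lt (le_csSup hbdd hmem) hA
  -- expansion of vectors: if all coefficients vanish, the vector is zero
  have hbasis : ∀ v : Fin d → ℝ, (∀ j, (⇑(B j)) ⬝ᵥ v = 0) → v = 0 := by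
    intro v hv
    have h : B.repr ((WithLp.equiv 2 (Fin d → ℝ)).symm v) = 0 := by
      ext j
      rw [B.repr_apply_apply]
      rw [rwgd_inner_eq_dot]; exact hv j
    have := B.repr.injective (h.trans (map_zero _).symm)
    exact congrArg (WithLp.equiv 2 (Fin d → ℝ)) this
  -- Parseval
  have hpars : ∀ y : Fin d → ℝ, (l2norm y) ^ 2 = ∑ j, ((⇑(B j)) ⬝ᵥ y) ^ 2 := by
    intro y
    rw [l2norm_eq_norm, ← B.repr.norm_map ((WithLp.equiv 2 (Fin d → ℝ)).symm y),
      EuclideanSpace.norm_eq, Real.sq_sqrt (by positivity)]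
    congr 1
    ext j
    rw [B.repr_apply_apply, rwgd_inner_eq_dot, Real.norm_eq_abs, sq_abs]
  -- membership in the sigma set
  set S : Set ℝ :=
    {s : ℝ | 0 < s ∧ ∃ v : Fin d → ℝ, v ≠ 0 ∧ (Mᵀ * M) *ᵥ v = (s ^ 2) • v} with hSdef
  have hsig : sigmaMinPos (Aᵀ * A) = sInf S := rfl
  have hσ0 : 0 ≤ sInf S := Real.sInf_nonneg (fun s hs => hs.1.le)
  have hσle : ∀ j, 0 < μ j → sInf S ≤ μ j := by
    intro j hj
    refine csInf_le ⟨0, fun s hs => hs.1.le⟩ ?_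
    refine ⟨hj, ⇑(B j), hBne j, ?_⟩
    rw [hMsymm, ← mulVec_mulVec, hM.mulVec_eigenvectorBasis, mulVec_smul,
      hM.mulVec_eigenvectorBasis, smul_smul, ← sq]
  have hσ1 : sInf S ≤ 1 := by
    rcases Set.eq_empty_or_nonempty S with hS | ⟨s, hs⟩
    · rw [hS, Real.sInf_empty]; norm_num
    · obtain ⟨hspos, v, hvne, hveq⟩ := hs
      -- show s = μ j for some j with coefficient nonzero
      have hex : ∃ j, (⇑(B j)) ⬝ᵥ v ≠ 0 := by
        by_contra h
        push_neg at h
        exact hvne (hbasis v h)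
      obtain ⟨j, hj⟩ := hex
      have hcoeff : μ j * (μ j * ((⇑(B j)) ⬝ᵥ v)) = s ^ 2 * ((⇑(B j)) ⬝ᵥ v) := by
        have h1 : (⇑(B j)) ⬝ᵥ ((Mᵀ * M) *ᵥ v) = μ j * (μ j * ((⇑(B j)) ⬝ᵥ v)) := by
          rw [hMsymm, ← mulVec_mulVec, hdotM, hdotM]
        have h2 : (⇑(B j)) ⬝ᵥ ((s ^ 2 : ℝ) • v) = s ^ 2 * ((⇑(B j)) ⬝ᵥ v) := by
          rw [dotProduct_smul]; rfl
        rw [← h1, hveq, h2]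
      have hsq : μ j ^ 2 = s ^ 2 := by
        have h' : μ j ^ 2 * ((⇑(B j)) ⬝ᵥ v) = s ^ 2 * ((⇑(B j)) ⬝ᵥ v) := by
          rw [sq, mul_assoc]
          exact hcoeff
        exact mul_right_cancel₀ hj h'
      have : μ j = s := (pow_left_inj₀ (hμ0 j) hspos.le (by norm_num)).1 hsq
      calc sInf S ≤ s := csInf_le ⟨0, fun t ht => ht.1.le⟩ ⟨hspos, v, hvne, hveq⟩
        _ ≤ 1 := by rw [← this]; exact (hμ1 j).le
  -- kernel fact: μ j = 0 → coefficient of w vanishes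
  have hker : ∀ j, μ j = 0 → (⇑(B j)) ⬝ᵥ w = 0 := by
    intro j hj
    have hABj : A *ᵥ (⇑(B j)) = 0 := by
      have hdd : (A *ᵥ ⇑(B j)) ⬝ᵥ (A *ᵥ ⇑(B j)) = 0 := by
        rw [dotProduct_mulVec, vecMul_mulVec, ← hMdef, ← mulVec_transpose, hMsymm,
          hM.mulVec_eigenvectorBasis, ← hμdef, hj, zero_smul, zero_dotProduct]
      exact dotProduct_self_eq_zero.mp hdd
    rw [dotProduct_comm]
    exact hw _ hABj
  -- main estimate
  set σ := sInf S with hσdef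
  have hgoal : sigmaMinPos M = σ := rfl
  rw [hgoal]
  set x : Fin d → ℝ := ((1 : Matrix (Fin d) (Fin d) ℝ) - M) *ᵥ w with hxdef
  have hcx : ∀ j, (⇑(B j)) ⬝ᵥ x = (1 - μ j) * ((⇑(B j)) ⬝ᵥ w) := by
    intro j
    rw [hxdef, sub_mulVec, one_mulVec, dotProduct_sub, hdotM, sub_mul, one_mul]
  have hsq : (l2norm x) ^ 2 ≤ ((1 - σ) * l2norm w) ^ 2 := by
    rw [hpars x, mul_pow, hpars w, Finset.mul_sum]
    refine Finset.sum_le_sum fun j _ => ?_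
    rw [hcx j, mul_pow]
    rcases eq_or_ne ((⇑(B j)) ⬝ᵥ w) 0 with hc | hc
    · rw [hc]; simp
    · have hμpos : 0 < μ j := by
        rcases (hμ0 j).lt_or_eq with h | h
        · exact h
        · exact absurd (hker j h.symm) hc
      have h1 : (1 - μ j) ^ 2 ≤ (1 - σ) ^ 2 := by
        have h2 : 0 ≤ 1 - μ j := by linarith [hμ1 j]
        have h3 : 1 - μ j ≤ 1 - σ := by linarith [hσle j hμpos]
        exact pow_le_pow_left₀ h2 h3 2
      exact mul_le_mul_of_nonneg_right h1 (sq_nonneg _)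
  -- conclude
  have hl2x : 0 ≤ l2norm x := Real.sqrt_nonneg _
  have hrhs : 0 ≤ (1 - σ) * l2norm w :=
    mul_nonneg (by linarith) (Real.sqrt_nonneg _)
  calc l2norm x = Real.sqrt ((l2norm x) ^ 2) := by rw [Real.sqrt_sq hl2x]
    _ ≤ Real.sqrt (((1 - σ) * l2norm w) ^ 2) := Real.sqrt_le_sqrt hsq
    _ = (1 - σ) * l2norm w := Real.sqrt_sq hrhs
end
end

section
/- Let X be an n×d real matrix, Y ∈ ℝⁿ, and let D₁, D₂, … be i.i.d. copies of a random n×n diagonal matrix D with finite fourth moments and M₂ = E[D²] non-singular. Define 𝕏̂ = XᵀM₂X, ŵ = (M₂^{1/2}X)⁺(M₂^{1/2}Y), and the iterates ŵ_{k+1} = (I − α_k · XᵀD_k²X) ŵ_k + α_k · XᵀD_k²Y. Assume the deterministic initialization ŵ₁ lies in the orthogonal complement of ker(X), sup_ℓ α_ℓ·‖𝕏̂‖ < 1, and Σ_{ℓ=1}^∞ α_ℓ = ∞. Then for every k ≥ 1, ‖E[ŵ_{k+1} − ŵ]‖₂ ≤ exp(− σ⁺min(𝕏̂) · Σ_{ℓ=1}^k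 α_ℓ) · ‖ŵ₁ − ŵ‖₂, where σ⁺min denotes the smallest non-zero singular value and the expectation is over the weighting matrices. -/
open Matrix MeasureTheory ProbabilityTheory Filter
open scoped BigOperators

noncomputable section

/-! ### Auxiliary lemmas -/

lemma l2norm_nonneg {d : ℕ} (v : Fin d → ℝ) : 0 ≤ l2norm v := Real.sqrt_nonneg _

lemma l2norm_smul {d : ℕ} (r : ℝ) (v : Fin d → ℝ) : l2norm (r • v) = |r| * l2norm v := by
  unfold l2norm
  rw [← Real.sqrt_sq_eq_abs, ← Real.sqrt_mul (sq_nonneg r), Finset.mul_sum]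
  congr 1
  apply Finset.sum_congr rfl
  intros; simp [mul_pow]

/-- orthonormality of the eigenvector basis in coordinates -/
lemma ortho_coords {d : ℕ} {A : Matrix (Fin d) (Fin d) ℝ} (hA : A.IsHermitian) (i i' : Fin d) :
    ∑ j, hA.eigenvectorBasis i j * hA.eigenvectorBasis i' j = if i = i' then 1 else 0 := by
  have h := (orthonormal_iff_ite.mp hA.eigenvectorBasis.orthonormal) i i'
  simpa [PiLp.inner_apply, RCLike.inner_apply, conj_trivial, mul_comm] using h

/-- Parseval-type identity in coordinates -/
lemma parseval_coords {d : ℕ} {A : Matrix (Fin d) (Fin d) ℝ} (hA : A.IsHermitian)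
    (g : Fin d → ℝ) :
    ∑ j, (∑ i, g i * hA.eigenvectorBasis i j) ^ 2 = ∑ i, g i ^ 2 := by
  set b := hA.eigenvectorBasis with hb
  have : ∀ j, (∑ i, g i * b i j) ^ 2 = ∑ i, ∑ i', (g i * g i') * (b i j * b i' j) := by
    intro j
    rw [sq, Finset.sum_mul_sum]
    apply Finset.sum_congr rfl; intro i _; apply Finset.sum_congr rfl; intro i' _; ring
  simp_rw [this]
  rw [Finset.sum_comm]
  have : ∀ i, ∑ j, ∑ i', g i * g i' * (b i j * b i' j) = g i ^ 2 := by
    intro i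
    rw [Finset.sum_comm]
    have : ∀ i', ∑ j, g i * g i' * (b i j * b i' j) = g i * g i' * (if i = i' then 1 else 0) := by
      intro i'
      rw [← Finset.mul_sum, ortho_coords hA i i']
    simp_rw [this]
    simp [Finset.sum_ite_eq, sq]
  simp_rw [this]

lemma expand_coords {d : ℕ} {A : Matrix (Fin d) (Fin d) ℝ} (hA : A.IsHermitian)
    (v : Fin d → ℝ) (j : Fin d) :
    v j = ∑ i, (∑ l, hA.eigenvectorBasis i l * v l) * hA.eigenvectorBasis i j := by
  have h := hA.eigenvectorBasis.sum_repr (WithLp.toLp 2 v)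
  have h2 := congrArg (fun x : EuclideanSpace ℝ (Fin d) => x j) h
  simp only [WithLp.ofLp_sum, Finset.sum_apply, WithLp.ofLp_smul, Pi.smul_apply, smul_eq_mul,
    OrthonormalBasis.repr_apply_apply, PiLp.inner_apply, RCLike.inner_apply, conj_trivial,
    PiLp.toLp_apply] at h2
  simpa [mul_comm] using h2.symm

lemma specNorm_bddAbove {d : ℕ} (A : Matrix (Fin d) (Fin d) ℝ) :
    BddAbove {c : ℝ | ∃ v : Fin d → ℝ, l2norm v = 1 ∧ c = l2norm (A *ᵥ v)} := by
  refine ⟨Real.sqrt (∑ p, ∑ q, A p q ^ 2), ?_⟩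
  rintro c ⟨v, hv, rfl⟩
  have hv2 : ∑ q, v q ^ 2 = 1 := by
    have := congrArg (· ^ 2) hv
    simpa [l2norm, Real.sq_sqrt (Finset.sum_nonneg fun q _ => sq_nonneg (v q))] using this
  apply Real.sqrt_le_sqrt
  apply Finset.sum_le_sum
  intro p _
  have : (A *ᵥ v) p = ∑ q, A p q * v q := rfl
  rw [this]
  calc (∑ q, A p q * v q) ^ 2 ≤ (∑ q, A p q ^ 2) * ∑ q, v q ^ 2 :=
        Finset.sum_mul_sq_le_sq_mul_sq _ _ _
    _ = ∑ q, A p q ^ 2 := by rw [hv2, mul_one]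

/-- The key one-step contraction estimate on the orthogonal complement of the kernel. -/
lemma contraction_step {d : ℕ} (A : Matrix (Fin d) (Fin d) ℝ) (hA : A.PosSemidef)
    (α C : ℝ) (hα : 0 ≤ α) (hC : C < 1) (hαA : α * specNorm A ≤ C)
    (v : Fin d → ℝ) (hv : ∀ u, A *ᵥ u = 0 → v ⬝ᵥ u = 0) :
    l2norm (((1 : Matrix (Fin d) (Fin d) ℝ) - α • A) *ᵥ v)
      ≤ Real.exp (-(sigmaMinPos A * α)) * l2norm v := by
  have hH : A.IsHermitian := hA.1
  have hAT : Aᵀ = A := by have h := hH; simp at h; exact h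
  set b := hH.eigenvectorBasis with hb
  set μ := hH.eigenvalues with hμ
  set σ := sigmaMinPos A with hσ
  set c : Fin d → ℝ := fun i => ∑ l, b i l * v l with hc
  have hσ0 : 0 ≤ σ := Real.sInf_nonneg fun s hs => hs.1.le
  have hμpos : ∀ i, c i ≠ 0 → 0 < μ i := by
    intro i hci
    rcases lt_or_eq_of_le (hA.eigenvalues_nonneg i) with h | h
    · exact h
    · exfalso
      apply hci
      have h0 : A *ᵥ ⇑(b i) = 0 := by
        rw [hH.mulVec_eigenvectorBasis, ← h, zero_smul]
      have := hv _ h0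
      rw [hc]
      simpa [dotProduct, mul_comm] using this
  have hbnd : ∀ i, ((1 - α * μ i) * c i) ^ 2 ≤ (Real.exp (-(σ * α))) ^ 2 * c i ^ 2 := by
    intro i
    by_cases hci : c i = 0
    · simp [hci]
    have hμi : 0 < μ i := hμpos i hci
    have hbne : ⇑(b i) ≠ 0 := by
      intro h0
      have h1 : ‖b i‖ = 1 := hH.eigenvectorBasis.orthonormal.1 i
      have : (b i : EuclideanSpace ℝ (Fin d)) = 0 := by
        ext j; exact congrFun h0 j
      rw [this] at h1; simp at h1
    have hσle : σ ≤ μ i := by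
      apply csInf_le ⟨0, fun s hs => hs.1.le⟩
      refine ⟨hμi, ⇑(b i), hbne, ?_⟩
      rw [hAT, ← Matrix.mulVec_mulVec, hH.mulVec_eigenvectorBasis, Matrix.mulVec_smul,
        hH.mulVec_eigenvectorBasis, smul_smul, sq]
    have hl2b : l2norm ⇑(b i) = 1 := by
      have h1 := ortho_coords hH i i
      rw [if_pos rfl] at h1
      have h2 : ∑ j, b i j ^ 2 = 1 := by simpa [pow_two] using h1
      unfold l2norm
      rw [h2, Real.sqrt_one]
    have hμle : μ i ≤ specNorm A := by
      apply le_csSup (specNorm_bddAbove A)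
      refine ⟨⇑(b i), hl2b, ?_⟩
      rw [hH.mulVec_eigenvectorBasis]
      rw [show μ i • ⇑(b i) = μ i • ⇑(b i) from rfl, l2norm_smul, hl2b, mul_one,
        abs_of_nonneg hμi.le]
    have h1 : α * μ i ≤ C := le_trans (by nlinarith [hμle]) hαA
    have h2 : 0 ≤ 1 - α * μ i := by linarith
    have h3 : α * σ ≤ α * μ i := mul_le_mul_of_nonneg_left hσle hα
    have h4 : 1 - α * μ i ≤ Real.exp (-(σ * α)) := by
      have := Real.add_one_le_exp (-(σ * α))
      nlinarith
    have h5 : (1 - α * μ i) ^ 2 ≤ (Real.exp (-(σ * α))) ^ 2 := by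
      apply pow_le_pow_left₀ h2 h4
    calc ((1 - α * μ i) * c i) ^ 2 = (1 - α * μ i) ^ 2 * c i ^ 2 := by ring
      _ ≤ (Real.exp (-(σ * α))) ^ 2 * c i ^ 2 :=
        mul_le_mul_of_nonneg_right h5 (sq_nonneg _)
  have hcoord : ∀ j, (((1 : Matrix (Fin d) (Fin d) ℝ) - α • A) *ᵥ v) j
      = ∑ i, ((1 - α * μ i) * c i) * b i j := by
    intro j
    have hAv : ∀ l, (A *ᵥ ⇑(b l)) j = μ l * b l j := by
      intro l
      rw [hH.mulVec_eigenvectorBasis]; rfl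
    have hmv : (((1 : Matrix (Fin d) (Fin d) ℝ) - α • A) *ᵥ v) j
        = v j - α * (A *ᵥ v) j := by
      rw [Matrix.sub_mulVec, Matrix.one_mulVec, Matrix.smul_mulVec]
      simp
    rw [hmv]
    have hAvj : (A *ᵥ v) j = ∑ i, c i * (μ i * b i j) := by
      have : (A *ᵥ v) j = ∑ l, A j l * v l := rfl
      rw [this]
      calc ∑ l, A j l * v l
          = ∑ l, A j l * (∑ i, c i * b i l) := by
            apply Finset.sum_congr rfl; intro l _
            rw [← expand_coords hH v l]
        _ = ∑ l, ∑ i, c i * (A j l * b i l) := by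
            apply Finset.sum_congr rfl; intro l _
            rw [Finset.mul_sum]
            apply Finset.sum_congr rfl; intros; ring
        _ = ∑ i, ∑ l, c i * (A j l * b i l) := Finset.sum_comm
        _ = ∑ i, c i * (μ i * b i j) := by
            apply Finset.sum_congr rfl; intro i _
            rw [← Finset.mul_sum]
            congr 1
            rw [← hAv i]
            rfl
    rw [hAvj, expand_coords hH v j, Finset.mul_sum, ← Finset.sum_sub_distrib]
    apply Finset.sum_congr rfl; intro i _
    show c i * b i j - α * (c i * (μ i * b i j)) = (1 - α * μ i) * c i * b i j
    ring
  have hLHS : l2norm (((1 : Matrix (Fin d) (Fin d) ℝ) - α • A) *ᵥ v)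
      = Real.sqrt (∑ i, ((1 - α * μ i) * c i) ^ 2) := by
    rw [l2norm]
    congr 1
    rw [← parseval_coords hH (fun i => (1 - α * μ i) * c i)]
    apply Finset.sum_congr rfl; intro j _
    rw [hcoord j]
  have hRHS : l2norm v = Real.sqrt (∑ i, c i ^ 2) := by
    rw [l2norm]
    congr 1
    rw [← parseval_coords hH c]
    apply Finset.sum_congr rfl; intro j _
    congr 1
    exact expand_coords hH v j
  rw [hLHS, hRHS]
  calc Real.sqrt (∑ i, ((1 - α * μ i) * c i) ^ 2)
      ≤ Real.sqrt ((Real.exp (-(σ * α))) ^ 2 * ∑ i, c i ^ 2) := by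
        apply Real.sqrt_le_sqrt
        rw [Finset.mul_sum]
        exact Finset.sum_le_sum fun i _ => hbnd i
    _ = Real.exp (-(σ * α)) * Real.sqrt (∑ i, c i ^ 2) := by
        rw [Real.sqrt_mul (sq_nonneg _), Real.sqrt_sq (Real.exp_pos _).le]

/-- orthogonality to the kernel is preserved by the iteration map -/
lemma perp_step {d : ℕ} (A : Matrix (Fin d) (Fin d) ℝ) (hAT : Aᵀ = A) (a : ℝ) (v : Fin d → ℝ)
    (hv : ∀ u, A *ᵥ u = 0 → v ⬝ᵥ u = 0) (u : Fin d → ℝ) (hu : A *ᵥ u = 0) :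
    (((1 : Matrix (Fin d) (Fin d) ℝ) - a • A) *ᵥ v) ⬝ᵥ u = 0 := by
  rw [Matrix.sub_mulVec, Matrix.one_mulVec, Matrix.smul_mulVec,
    sub_dotProduct, smul_dotProduct]
  have h1 : (A *ᵥ v) ⬝ᵥ u = v ⬝ᵥ (A *ᵥ u) := by
    rw [Matrix.dotProduct_mulVec v A u, ← Matrix.mulVec_transpose, hAT]
  rw [h1, hu, dotProduct_zero, hv u hu]
  simp

lemma tripleEntry {n d : ℕ} (X : Matrix (Fin n) (Fin d) ℝ) (f : Fin n → ℝ) (i j : Fin d) :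
    (Xᵀ * Matrix.diagonal f * X) i j = ∑ l, X l i * f l * X l j := by
  rw [Matrix.mul_apply]
  apply Finset.sum_congr rfl
  intro l _
  rw [Matrix.mul_diagonal, Matrix.transpose_apply]

lemma pairEntry {n d : ℕ} (X : Matrix (Fin n) (Fin d) ℝ) (f : Fin n → ℝ) (i : Fin d)
    (l : Fin n) : (Xᵀ * Matrix.diagonal f) i l = X l i * f l := by
  rw [Matrix.mul_diagonal, Matrix.transpose_apply]

/-- componentwise form of one step of the iteration -/
lemma iter_component {n d : ℕ} (X : Matrix (Fin n) (Fin d) ℝ) (Y : Fin n → ℝ) (a : ℝ)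
    (Dv : Fin n → ℝ) (u : Fin d → ℝ) (j : Fin d) :
    (((1 : Matrix (Fin d) (Fin d) ℝ) - a • (Xᵀ * Matrix.diagonal (fun i => (Dv i)^2) * X)) *ᵥ u
      + a • ((Xᵀ * Matrix.diagonal (fun i => (Dv i)^2)) *ᵥ Y)) j
    = u j - a * ∑ j', ∑ l, (X l j * X l j') * ((Dv l)^2 * u j')
      + a * ∑ l, (X l j * Y l) * (Dv l)^2 := by
  have hB : ((Xᵀ * Matrix.diagonal (fun i => (Dv i)^2) * X) *ᵥ u) j
      = ∑ j', ∑ l, (X l j * X l j') * ((Dv l)^2 * u j') := by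
    have h0 : ((Xᵀ * Matrix.diagonal (fun i => (Dv i)^2) * X) *ᵥ u) j
        = ∑ j', (Xᵀ * Matrix.diagonal (fun i => (Dv i)^2) * X) j j' * u j' := rfl
    rw [h0]
    apply Finset.sum_congr rfl
    intro j' _
    rw [tripleEntry, Finset.sum_mul]
    apply Finset.sum_congr rfl
    intro l _
    ring
  have hC : ((Xᵀ * Matrix.diagonal (fun i => (Dv i)^2)) *ᵥ Y) j
      = ∑ l, (X l j * Y l) * (Dv l)^2 := by
    have h0 : ((Xᵀ * Matrix.diagonal (fun i => (Dv i)^2)) *ᵥ Y) j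
        = ∑ l, (Xᵀ * Matrix.diagonal (fun i => (Dv i)^2)) j l * Y l := rfl
    rw [h0]
    apply Finset.sum_congr rfl
    intro l _
    rw [pairEntry]
    ring
  simp only [Pi.add_apply, Pi.smul_apply, smul_eq_mul, Matrix.sub_mulVec,
    Matrix.smul_mulVec, Matrix.one_mulVec, Pi.sub_apply]
  rw [hB, hC]

/-- Lemma 2: convergence of the first moment.
Under the standing assumptions (deterministic initialization orthogonal to
`ker X`, `sup_ℓ α_ℓ ‖𝕏̂‖ < 1`, `∑ α_ℓ = ∞`), the expected iterates converge:
`‖E[ŵ_{k+1} - ŵ]‖₂ ≤ exp(-σ⁺min(𝕏̂) ∑_{ℓ=1}^k α_ℓ) ‖ŵ₁ - ŵ‖₂`. -/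
theorem randomly_weighted_gd_stmt5 {n d : ℕ}
    {Ω : Type*} [MeasurableSpace Ω] (μ : Measure Ω) [IsProbabilityMeasure μ]
    (X : Matrix (Fin n) (Fin d) ℝ) (Y : Fin n → ℝ)
    (D : ℕ → Ω → Fin n → ℝ) (hDmeas : ∀ k, Measurable (D k))
    (hDindep : iIndepFun D μ)
    (hDident : ∀ k, IdentDistrib (D k) (D 0) μ μ)
    (hmom : ∀ i, ∀ p : ℕ, p ≤ 4 → Integrable (fun ω => (D 0 ω i) ^ p) μ)
    (M2 : Matrix (Fin n) (Fin n) ℝ)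
    (hM2 : M2 = Matrix.diagonal fun i => ∫ ω, (D 0 ω i) ^ 2 ∂μ)
    (hM2unit : IsUnit M2.det)
    (Rh : Matrix (Fin n) (Fin n) ℝ)
    (hRh : Rh = Matrix.diagonal fun i => Real.sqrt (∫ ω, (D 0 ω i) ^ 2 ∂μ))
    (Xhp : Matrix (Fin d) (Fin n) ℝ) (hXhp : IsMoorePenrose (Rh * X) Xhp)
    (what : Fin d → ℝ) (hwhat : what = Xhp *ᵥ (Rh *ᵥ Y))
    (α : ℕ → ℝ) (hαpos : ∀ k, 0 < α k)
    (hsup : ∃ c : ℝ, c < 1 ∧ ∀ k, α k * specNorm (Xᵀ * M2 * X) ≤ c)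
    (hdiv : Tendsto (fun k => ∑ ℓ ∈ Finset.Icc 1 k, α ℓ) atTop atTop)
    (w1 : Fin d → ℝ) (hw1perp : perpKer X w1)
    (w : ℕ → Ω → Fin d → ℝ) (hinit : ∀ ω, w 1 ω = w1)
    (hrec : ∀ k, 1 ≤ k → ∀ ω,
      w (k + 1) ω = ((1 : Matrix (Fin d) (Fin d) ℝ)
          - α k • (Xᵀ * Matrix.diagonal (fun i => (D k ω i) ^ 2) * X)) *ᵥ w k ω
        + α k • ((Xᵀ * Matrix.diagonal (fun i => (D k ω i) ^ 2)) *ᵥ Y)) :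
    ∀ k, 1 ≤ k →
      l2norm (vecExp μ (fun ω => w (k + 1) ω - what))
        ≤ Real.exp (-(sigmaMinPos (Xᵀ * M2 * X)) * ∑ ℓ ∈ Finset.Icc 1 k, α ℓ)
            * l2norm (w1 - what) := by
  -- notation
  set m : Fin n → ℝ := fun l => ∫ ω, (D 0 ω l) ^ 2 ∂μ with hm
  set A : Matrix (Fin d) (Fin d) ℝ := Xᵀ * M2 * X with hA
  set e : ℕ → Fin d → ℝ := fun k => vecExp μ (fun ω => w k ω - what) with he
  have hm_nonneg : ∀ l, 0 ≤ m l := fun l => integral_nonneg fun ω => sq_nonneg _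
  have hM2' : M2 = Matrix.diagonal m := hM2
  have hRh' : Rh = Matrix.diagonal fun l => Real.sqrt (m l) := hRh
  have hM2RhRh : M2 = Rh * Rh := by
    have hfun : (fun l => Real.sqrt (m l) * Real.sqrt (m l)) = m :=
      funext fun l => Real.mul_self_sqrt (hm_nonneg l)
    rw [hM2', hRh', Matrix.diagonal_mul_diagonal, hfun]
  have hRhT : Rhᵀ = Rh := by rw [hRh']; exact Matrix.diagonal_transpose _
  have hGt : (Rh * X)ᵀ = Xᵀ * Rh := by rw [Matrix.transpose_mul, hRhT]
  have hAG : A = (Rh * X)ᵀ * (Rh * X) := by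
    rw [hA, hGt, hM2RhRh]
    simp only [Matrix.mul_assoc]
  have hPSD : A.PosSemidef := by
    rw [hAG, ← show (Rh * X)ᴴ = (Rh * X)ᵀ by simp]
    exact Matrix.posSemidef_conjTranspose_mul_self (Rh * X)
  have hAT : Aᵀ = A := by have h := hPSD.1; simp at h; exact h
  -- Penrose conditions
  obtain ⟨P1, P2, P3, P4⟩ := hXhp
  -- normal equations
  have hNE : A * (Xhp * Rh) = Xᵀ * M2 := by
    have key : (Rh * X)ᵀ * (Rh * X * Xhp) = (Rh * X)ᵀ := by
      calc (Rh * X)ᵀ * (Rh * X * Xhp) = (Rh * X)ᵀ * (Rh * X * Xhp)ᵀ := by rw [P3]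
        _ = (Rh * X * Xhp * (Rh * X))ᵀ := by rw [Matrix.transpose_mul _ (Rh * X)]
        _ = (Rh * X)ᵀ := by rw [P1]
    calc A * (Xhp * Rh) = (Rh * X)ᵀ * (Rh * X * Xhp) * Rh := by
          rw [hAG]; simp only [Matrix.mul_assoc]
      _ = (Rh * X)ᵀ * Rh := by rw [key]
      _ = Xᵀ * M2 := by rw [hGt, hM2RhRh]; simp only [Matrix.mul_assoc]
  have hNEv : A *ᵥ what = (Xᵀ * M2) *ᵥ Y := by
    rw [hwhat]
    simp only [Matrix.mulVec_mulVec]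
    rw [hNE]
  -- kernel facts
  have hkerG : ∀ u, A *ᵥ u = 0 → (Rh * X) *ᵥ u = 0 := by
    intro u hu
    have h1 : u ⬝ᵥ (A *ᵥ u) = 0 := by rw [hu, dotProduct_zero]
    have h2 : ((Rh * X) *ᵥ u) ⬝ᵥ ((Rh * X) *ᵥ u) = 0 := by
      have h4 : u ⬝ᵥ (A *ᵥ u) = ((Rh * X) *ᵥ u) ⬝ᵥ ((Rh * X) *ᵥ u) := by
        conv_lhs => rw [hAG, ← Matrix.mulVec_mulVec, Matrix.dotProduct_mulVec u,
          ← Matrix.mulVec_transpose, Matrix.transpose_transpose]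
      rw [← h4, h1]
    have h3 : ∑ l, ((Rh * X) *ᵥ u) l * ((Rh * X) *ᵥ u) l = 0 := h2
    funext l
    have := (Finset.sum_eq_zero_iff_of_nonneg
      (fun l _ => mul_self_nonneg (((Rh * X) *ᵥ u) l))).mp h3 l (Finset.mem_univ l)
    exact mul_self_eq_zero.mp this
  have hmpos : ∀ l, 0 < m l := by
    intro l
    rcases lt_or_eq_of_le (hm_nonneg l) with h | h
    · exact h
    · exfalso
      have hdet : M2.det ≠ 0 := IsUnit.ne_zero hM2unit
      apply hdet
      rw [hM2', Matrix.det_diagonal]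
      exact Finset.prod_eq_zero (Finset.mem_univ l) h.symm
  have hker : ∀ u, A *ᵥ u = 0 → X *ᵥ u = 0 := by
    intro u hu
    have hG := hkerG u hu
    have hRhX : (Rh * X) *ᵥ u = Rh *ᵥ (X *ᵥ u) := (Matrix.mulVec_mulVec u Rh X).symm
    funext l
    have h1 : (Rh *ᵥ (X *ᵥ u)) l = Real.sqrt (m l) * (X *ᵥ u) l := by
      rw [hRh']
      exact Matrix.mulVec_diagonal _ _ _
    have h2 : Real.sqrt (m l) * (X *ᵥ u) l = 0 := by
      rw [← h1, ← hRhX, hG]; rfl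
    have h3 : Real.sqrt (m l) ≠ 0 := ne_of_gt (Real.sqrt_pos.mpr (hmpos l))
    have := mul_eq_zero.mp h2
    tauto
  have hwhatperp : ∀ u, A *ᵥ u = 0 → what ⬝ᵥ u = 0 := by
    intro u hu
    have hG := hkerG u hu
    have hXhpfact : Xhp = (Rh * X)ᵀ * (Xhpᵀ * Xhp) := by
      calc Xhp = Xhp * (Rh * X) * Xhp := P2.symm
        _ = (Xhp * (Rh * X))ᵀ * Xhp := by rw [P4]
        _ = (Rh * X)ᵀ * Xhpᵀ * Xhp := by rw [Matrix.transpose_mul Xhp (Rh * X)]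
        _ = (Rh * X)ᵀ * (Xhpᵀ * Xhp) := by rw [Matrix.mul_assoc]
    have hwfact : what = (Rh * X)ᵀ *ᵥ ((Xhpᵀ * Xhp) *ᵥ (Rh *ᵥ Y)) := by
      rw [hwhat]
      conv_lhs => rw [hXhpfact]
      rw [← Matrix.mulVec_mulVec]
    rw [hwfact, Matrix.mulVec_transpose, ← Matrix.dotProduct_mulVec, hG,
      dotProduct_zero]
  have he1perp : ∀ u, A *ᵥ u = 0 → (w1 - what) ⬝ᵥ u = 0 := by
    intro u hu
    rw [sub_dotProduct, hw1perp u (hker u hu), hwhatperp u hu, sub_zero]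
  -- structure of the iterates as functions of D_1, ..., D_{k-1}
  have hstruct : ∀ k, 1 ≤ k → ∃ F : (↥(Finset.range k) → (Fin n → ℝ)) → (Fin d → ℝ),
      Measurable F ∧ ∀ ω, w k ω = F (fun i => D i.1 ω) := by
    intro k hk
    induction k, hk using Nat.le_induction with
    | base =>
      exact ⟨fun _ => w1, measurable_const, fun ω => hinit ω⟩
    | succ k hk ih =>
      obtain ⟨F, hF, hFeq⟩ := ih
      have hkmem : k ∈ Finset.range (k + 1) := by simp
      set res : (↥(Finset.range (k+1)) → (Fin n → ℝ))
          → (↥(Finset.range k) → (Fin n → ℝ)) :=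
        fun g i => g ⟨i.1, Finset.mem_range.mpr (Nat.lt_succ_of_lt (Finset.mem_range.mp i.2))⟩
        with hres
      have hresM : Measurable res := measurable_pi_lambda _ fun i => measurable_pi_apply _
      have hFres : Measurable fun g => F (res g) := hF.comp hresM
      have hFresj : ∀ j', Measurable fun g => F (res g) j' :=
        fun j' => (measurable_pi_apply j').comp hFres
      have hgk : ∀ l, Measurable
          (fun g : ↥(Finset.range (k+1)) → (Fin n → ℝ) => g ⟨k, hkmem⟩ l) :=
        fun l => (measurable_pi_apply l).comp (measurable_pi_apply _)
      refine ⟨fun g => fun j => F (res g) j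
          - α k * ∑ j', ∑ l, (X l j * X l j') * ((g ⟨k, hkmem⟩ l)^2 * F (res g) j')
          + α k * ∑ l, (X l j * Y l) * (g ⟨k, hkmem⟩ l)^2, ?_, ?_⟩
      · apply measurable_pi_lambda
        intro j
        apply Measurable.add
        · apply Measurable.sub (hFresj j)
          apply Measurable.const_mul
          apply Finset.measurable_sum
          intro j' _
          apply Finset.measurable_sum
          intro l _
          exact (((hgk l).pow_const 2).mul (hFresj j')).const_mul _
        · apply Measurable.const_mul
          apply Finset.measurable_sum
          intro l _
          exact ((hgk l).pow_const 2).const_mul _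
      · intro ω
        rw [hrec k hk ω]
        funext j
        rw [iter_component, hFeq ω]
  -- independence of D k and (a function of) w k
  have hindepc : ∀ k, 1 ≤ k → ∀ (φ : (Fin n → ℝ) → ℝ) (ψ : (Fin d → ℝ) → ℝ),
      Measurable φ → Measurable ψ →
      IndepFun (fun ω => φ (D k ω)) (fun ω => ψ (w k ω)) μ := by
    intro k hk φ ψ hφ hψ
    obtain ⟨F, hF, hFeq⟩ := hstruct k hk
    have hdisj : Disjoint ({k} : Finset ℕ) (Finset.range k) :=
      Finset.disjoint_singleton_left.mpr (by simp)
    have hbase := hDindep.indepFun_finset {k} (Finset.range k) hdisj hDmeas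
    have hcomp := hbase.comp
      (φ := fun g : ↥({k} : Finset ℕ) → (Fin n → ℝ) => φ (g ⟨k, Finset.mem_singleton_self k⟩))
      (ψ := fun g : ↥(Finset.range k) → (Fin n → ℝ) => ψ (F g))
      (hφ.comp (measurable_pi_apply _)) (hψ.comp hF)
    have heq1 : (fun g : ↥({k} : Finset ℕ) → (Fin n → ℝ) =>
        φ (g ⟨k, Finset.mem_singleton_self k⟩)) ∘ (fun ω (i : ↥({k} : Finset ℕ)) => D i ω)
        = fun ω => φ (D k ω) := rfl
    have heq2 : (fun g : ↥(Finset.range k) → (Fin n → ℝ) => ψ (F g))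
        ∘ (fun ω (i : ↥(Finset.range k)) => D i ω)
        = fun ω => ψ (w k ω) := by
      funext ω
      simp only [Function.comp_apply]
      rw [hFeq ω]
    rwa [heq1, heq2] at hcomp
  -- integrability of squares of D entries
  have hD2id : ∀ k l, IdentDistrib (fun ω => (D k ω l)^2) (fun ω => (D 0 ω l)^2) μ μ :=
    fun k l => (hDident k).comp ((measurable_pi_apply l).pow_const 2)
  have hD2int : ∀ k l, Integrable (fun ω => (D k ω l)^2) μ :=
    fun k l => (hD2id k l).integrable_iff.mpr (hmom l 2 (by norm_num))
  have hD2mean : ∀ k l, ∫ ω, (D k ω l)^2 ∂μ = m l := fun k l => (hD2id k l).integral_eq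
  -- integrability of the iterates
  have hwint : ∀ k, 1 ≤ k → ∀ j, Integrable (fun ω => w k ω j) μ := by
    intro k hk
    induction k, hk using Nat.le_induction with
    | base =>
      intro j
      have : (fun ω => w 1 ω j) = fun _ => w1 j := by funext ω; rw [hinit ω]
      rw [this]; exact integrable_const _
    | succ k hk ih =>
      intro j
      have hexp : (fun ω => w (k+1) ω j) = fun ω =>
          w k ω j - α k * ∑ j', ∑ l, (X l j * X l j') * ((D k ω l)^2 * w k ω j')
          + α k * ∑ l, (X l j * Y l) * (D k ω l)^2 := by
        funext ω
        rw [hrec k hk ω, iter_component]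
      rw [hexp]
      have hprod : ∀ j' l, Integrable (fun ω => (D k ω l)^2 * w k ω j') μ := by
        intro j' l
        have hind : IndepFun (fun ω => (D k ω l)^2) (fun ω => w k ω j') μ :=
          hindepc k hk (fun v => (v l)^2) (fun u => u j')
            ((measurable_pi_apply l).pow_const 2) (measurable_pi_apply j')
        exact hind.integrable_mul (hD2int k l) (ih j')
      have hs1 : Integrable
          (fun ω => ∑ j', ∑ l, (X l j * X l j') * ((D k ω l)^2 * w k ω j')) μ := by
        apply integrable_finset_sum
        intro j' _
        apply integrable_finset_sum
        intro l _
        exact (hprod j' l).const_mul _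
      have hs2 : Integrable (fun ω => ∑ l, (X l j * Y l) * (D k ω l)^2) μ := by
        apply integrable_finset_sum
        intro l _
        exact (hD2int k l).const_mul _
      exact ((ih j).sub (hs1.const_mul _)).add (hs2.const_mul _)
  -- the expectation recursion
  have hkey : ∀ k, 1 ≤ k →
      e (k+1) = ((1 : Matrix (Fin d) (Fin d) ℝ) - α k • A) *ᵥ e k := by
    intro k hk
    funext j
    set Ik : Fin d → ℝ := fun j' => ∫ ω, w k ω j' ∂μ with hIk
    have hprodI : ∀ j' l, Integrable (fun ω => (D k ω l)^2 * w k ω j') μ := by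
      intro j' l
      have hind : IndepFun (fun ω => (D k ω l)^2) (fun ω => w k ω j') μ :=
        hindepc k hk (fun v => (v l)^2) (fun u => u j')
          ((measurable_pi_apply l).pow_const 2) (measurable_pi_apply j')
      exact hind.integrable_mul (hD2int k l) (hwint k hk j')
    have hprodE : ∀ j' l, ∫ ω, (D k ω l)^2 * w k ω j' ∂μ = m l * Ik j' := by
      intro j' l
      have hind : IndepFun (fun ω => (D k ω l)^2) (fun ω => w k ω j') μ :=
        hindepc k hk (fun v => (v l)^2) (fun u => u j')
          ((measurable_pi_apply l).pow_const 2) (measurable_pi_apply j')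
      have h2 := hind.integral_mul_eq_mul_integral (hD2int k l).1 (hwint k hk j').1
      rw [← hD2mean k l]
      exact h2
    have heint : ∀ j', e k j' = Ik j' - what j' := by
      intro j'
      show (∫ ω, (w k ω - what) j' ∂μ) = Ik j' - what j'
      have hfun : (fun ω => (w k ω - what) j') = fun ω => w k ω j' - what j' := rfl
      rw [hfun, integral_sub (hwint k hk j') (integrable_const _), integral_const]
      simp [hIk]
    -- abbreviations for the two random sums
    set S1 : Ω → ℝ := fun ω => ∑ j', ∑ l, (X l j * X l j') * ((D k ω l)^2 * w k ω j')
      with hS1def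
    set S2 : Ω → ℝ := fun ω => ∑ l, (X l j * Y l) * (D k ω l)^2 with hS2def
    have hterm1 : ∀ j', Integrable
        (fun ω => ∑ l, (X l j * X l j') * ((D k ω l)^2 * w k ω j')) μ := by
      intro j'
      apply integrable_finset_sum
      intro l _
      exact (hprodI j' l).const_mul _
    have hS1int : Integrable S1 μ := by
      rw [hS1def]
      apply integrable_finset_sum
      intro j' _
      exact hterm1 j'
    have hS2int : Integrable S2 μ := by
      rw [hS2def]
      apply integrable_finset_sum
      intro l _
      exact (hD2int k l).const_mul _
    have hS1c : Integrable (fun ω => α k * S1 ω) μ := hS1int.const_mul _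
    have hS2c : Integrable (fun ω => α k * S2 ω) μ := hS2int.const_mul _
    have hgint : Integrable (fun ω => w k ω j - α k * S1 ω) μ :=
      (hwint k hk j).sub hS1c
    have hfint : Integrable (fun ω => w k ω j - α k * S1 ω + α k * S2 ω) μ :=
      hgint.add hS2c
    have hS1val : ∫ ω, S1 ω ∂μ = ∑ j', ∑ l, (X l j * X l j') * (m l * Ik j') := by
      rw [integral_finset_sum _ (fun j' _ => hterm1 j')]
      apply Finset.sum_congr rfl
      intro j' _
      rw [integral_finset_sum _ (fun l _ => (hprodI j' l).const_mul _)]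
      apply Finset.sum_congr rfl
      intro l _
      rw [integral_const_mul, hprodE j' l]
    have hS2val : ∫ ω, S2 ω ∂μ = ∑ l, (X l j * Y l) * m l := by
      rw [integral_finset_sum _ (fun l _ => (hD2int k l).const_mul _)]
      apply Finset.sum_congr rfl
      intro l _
      rw [integral_const_mul, hD2mean k l]
    -- compute the LHS
    have hexp : (fun ω => (w (k+1) ω - what) j)
        = fun ω => (w k ω j - α k * S1 ω + α k * S2 ω) - what j := by
      funext ω
      show w (k+1) ω j - what j = _
      rw [hrec k hk ω, iter_component]
    have hLHS : e (k+1) j = Ik j - α k * ∑ j', ∑ l, (X l j * X l j') * (m l * Ik j')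
        + α k * ∑ l, (X l j * Y l) * m l - what j := by
      show (∫ ω, (w (k+1) ω - what) j ∂μ) = _
      rw [hexp, integral_sub hfint (integrable_const _),
        integral_add hgint hS2c, integral_sub (hwint k hk j) hS1c,
        integral_const_mul, integral_const_mul, integral_const,
        hS1val, hS2val]
      simp [hIk]
    -- compute the RHS
    have hRHSj : (((1 : Matrix (Fin d) (Fin d) ℝ) - α k • A) *ᵥ e k) j
        = e k j - α k * ∑ j', ∑ l, (X l j * X l j') * (m l * e k j') := by
      have h0 : (((1 : Matrix (Fin d) (Fin d) ℝ) - α k • A) *ᵥ e k) j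
          = e k j - α k * ((A *ᵥ e k) j) := by
        rw [Matrix.sub_mulVec, Matrix.one_mulVec, Matrix.smul_mulVec]
        simp
      rw [h0]
      congr 1
      congr 1
      have h1 : (A *ᵥ e k) j = ∑ j', A j j' * e k j' := rfl
      rw [h1]
      apply Finset.sum_congr rfl
      intro j' _
      rw [hA, hM2', tripleEntry, Finset.sum_mul]
      apply Finset.sum_congr rfl
      intro l _
      ring
    -- the normal equation in components
    have hNEj : ∑ j', ∑ l, (X l j * X l j') * (m l * what j')
        = ∑ l, (X l j * Y l) * m l := by
      have h1 : (A *ᵥ what) j = ∑ j', ∑ l, (X l j * X l j') * (m l * what j') := by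
        have h0 : (A *ᵥ what) j = ∑ j', A j j' * what j' := rfl
        rw [h0]
        apply Finset.sum_congr rfl
        intro j' _
        rw [hA, hM2', tripleEntry, Finset.sum_mul]
        apply Finset.sum_congr rfl
        intro l _
        ring
      have h2 : ((Xᵀ * M2) *ᵥ Y) j = ∑ l, (X l j * Y l) * m l := by
        have h0 : ((Xᵀ * M2) *ᵥ Y) j = ∑ l, (Xᵀ * M2) j l * Y l := rfl
        rw [h0]
        apply Finset.sum_congr rfl
        intro l _
        rw [hM2', pairEntry]
        ring
      rw [← h1, ← h2, hNEv]
    rw [hLHS, hRHSj, heint j]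
    have hsplit : ∑ j', ∑ l, (X l j * X l j') * (m l * e k j')
        = (∑ j', ∑ l, (X l j * X l j') * (m l * Ik j'))
          - ∑ j', ∑ l, (X l j * X l j') * (m l * what j') := by
      rw [← Finset.sum_sub_distrib]
      apply Finset.sum_congr rfl
      intro j' _
      rw [← Finset.sum_sub_distrib]
      apply Finset.sum_congr rfl
      intro l _
      rw [heint j']
      ring
    rw [hsplit, hNEj]
    ring
  -- perpendicularity is preserved
  have he1 : e 1 = w1 - what := by
    funext j
    show (∫ ω, (w 1 ω - what) j ∂μ) = (w1 - what) j
    have : (fun ω => (w 1 ω - what) j) = fun _ => (w1 - what) j := by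
      funext ω; rw [hinit ω]
    rw [this, integral_const]
    simp
  obtain ⟨C, hC1, hCb⟩ := hsup
  -- main induction
  have main : ∀ k, 1 ≤ k → (∀ u, A *ᵥ u = 0 → (e k) ⬝ᵥ u = 0) ∧
      l2norm (e k) ≤ Real.exp (-(sigmaMinPos A * ∑ ℓ ∈ Finset.Icc 1 (k-1), α ℓ))
        * l2norm (w1 - what) := by
    intro k hk
    induction k, hk using Nat.le_induction with
    | base =>
      constructor
      · intro u hu
        rw [he1]
        exact he1perp u hu
      · rw [he1]
        have : Finset.Icc 1 (1-1) = (∅ : Finset ℕ) := by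
          simp
        rw [this]
        simp
    | succ k hk ih =>
      obtain ⟨hperp, hbd⟩ := ih
      have hek1 : e (k+1) = ((1 : Matrix (Fin d) (Fin d) ℝ) - α k • A) *ᵥ e k := hkey k hk
      constructor
      · intro u hu
        rw [hek1]
        exact perp_step A hAT (α k) (e k) hperp u hu
      · have hcontr : l2norm (e (k+1)) ≤ Real.exp (-(sigmaMinPos A * α k)) * l2norm (e k) := by
          rw [hek1]
          exact contraction_step A hPSD (α k) C (hαpos k).le hC1 (hCb k) (e k) hperp
        have hSk : ∑ ℓ ∈ Finset.Icc 1 k, α ℓ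
            = (∑ ℓ ∈ Finset.Icc 1 (k-1), α ℓ) + α k := by
          have h1 : k - 1 + 1 = k := Nat.succ_pred_eq_of_pos hk
          conv_lhs => rw [← h1]
          rw [Finset.sum_Icc_succ_top (by omega : 1 ≤ k - 1 + 1)]
          rw [h1]
        have hstep : l2norm (e (k+1)) ≤ Real.exp (-(sigmaMinPos A * α k)) *
            (Real.exp (-(sigmaMinPos A * ∑ ℓ ∈ Finset.Icc 1 (k-1), α ℓ))
              * l2norm (w1 - what)) :=
          le_trans hcontr (mul_le_mul_of_nonneg_left hbd (Real.exp_pos _).le)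
        have hid : Real.exp (-(sigmaMinPos A * α k)) *
            (Real.exp (-(sigmaMinPos A * ∑ ℓ ∈ Finset.Icc 1 (k-1), α ℓ))
              * l2norm (w1 - what))
            = Real.exp (-(sigmaMinPos A * ∑ ℓ ∈ Finset.Icc 1 ((k+1)-1), α ℓ))
              * l2norm (w1 - what) := by
          rw [← mul_assoc, ← Real.exp_add]
          congr 2
          have h2 : (k+1) - 1 = k := by omega
          rw [h2, hSk]
          ring
        rw [hid] at hstep
        exact hstep
  -- conclude
  intro k hk
  have h := (main (k+1) (by omega)).2
  have h2 : (k+1) - 1 = k := by omega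
  rw [h2] at h
  rw [neg_mul]
  exact h
end
end
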